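/- The Thue–Morse word t has minimum subword complexity among all (7/3)-power-free infinite binary words: t itself is overlap-free (hence (7/3)-power-free), and for every (7/3)-power-free infinite binary word u and every n ≥ 0, p_t(n) ≤ p_u(n). -/

import Mathlib

/-- The factor of the infinite word `u` of length `m` starting at position `i`. -/
def factorAt {k : ℕ} (u : ℕ → Fin k) (i m : ℕ) : List (Fin k) :=
  (List.range m).map fun j => u (i + j)

/-- `v` is a factor of the infinite word `u`. -/
def IsFactor {k : ℕ} (v : List (Fin k)) (u : ℕ → Fin k) : Prop :=
  ∃ i, v = factorAt u i v.length

/-- Subword complexity: the number of distinct factors of length `n`. -/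
noncomputable def complexity {k : ℕ} (u : ℕ → Fin k) (n : ℕ) : ℕ :=
  Set.ncard {v : List (Fin k) | v.length = n ∧ IsFactor v u}

/-- The word `w` has period `q` (`1 ≤ q ≤ |w|`, and `w(i) = w(i+q)` whenever defined). -/
def HasPer {A : Type*} (w : List A) (q : ℕ) : Prop :=
  1 ≤ q ∧ q ≤ w.length ∧ ∀ i, i + q < w.length → w[i]? = w[i + q]?

/-- The minimal period of a finite word. -/
noncomputable def minPer {A : Type*} (w : List A) : ℕ := sInf {q | HasPer w q}

/-- The exponent of a finite word: its length divided by its minimal period. -/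
noncomputable def exponent {A : Type*} (w : List A) : ℝ := (w.length : ℝ) / (minPer w : ℝ)

/-- `u` is `α`-power-free: no nonempty factor has exponent `≥ α`. -/
def PowerFree {k : ℕ} (α : ℝ) (u : ℕ → Fin k) : Prop :=
  ∀ v : List (Fin k), v ≠ [] → IsFactor v u → exponent v < α

/-- `u` is `α⁺`-power-free: no nonempty factor has exponent `> α`. -/
def PowerFreePlus {k : ℕ} (α : ℝ) (u : ℕ → Fin k) : Prop :=
  ∀ v : List (Fin k), v ≠ [] → IsFactor v u → exponent v ≤ α

/-- Overlap-free means `2⁺`-power-free. -/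
def OverlapFree {k : ℕ} (u : ℕ → Fin k) : Prop := PowerFreePlus 2 u

/-- The Thue–Morse word: `t n` is the number of 1's, mod 2, in the binary expansion of `n`. -/
def thueMorse : ℕ → Fin 2 := fun n => Fin.ofNat 2 ((Nat.digits 2 n).count 1)

/-! ### Fin 2 facts -/

lemma fin2_ne {x y : Fin 2} (h : x ≠ y) : y = x + 1 := by revert x y; decide

lemma fin2_ne_trans {x y z : Fin 2} (h1 : x ≠ y) (h2 : y ≠ z) : x = z := by revert x y z; decide

lemma fin2_ne_add_one {x y : Fin 2} (h : x + 1 ≠ y) : x = y := by revert x y; decide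

lemma fin2_aa {a : Fin 2} : a + 1 + 1 = a := by revert a; decide

/-! ### factorAt basics -/

lemma factorAt_length {k : ℕ} (u : ℕ → Fin k) (i m : ℕ) : (factorAt u i m).length = m := by
  simp [factorAt]

lemma factorAt_get? {k : ℕ} (u : ℕ → Fin k) {i m r : ℕ} (h : r < m) :
    (factorAt u i m)[r]? = some (u (i + r)) := by
  simp [factorAt, h]

lemma factorAt_add {k : ℕ} (u : ℕ → Fin k) (i m n : ℕ) :
    factorAt u i (m + n) = factorAt u i m ++ factorAt u (i + m) n := by
  simp only [factorAt, List.range_add, List.map_append, List.map_map]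
  congr 1
  apply List.map_congr_left
  intro a _
  simp [Function.comp]
  congr 1
  omega

lemma hasPer_factorAt {u : ℕ → Fin 2} {i n q : ℕ} (h : HasPer (factorAt u i n) q) :
    ∀ r, r + q < n → u (i + r) = u (i + r + q) := by
  intro r hr
  have h2 := h.2.2 r (by rw [factorAt_length]; exact hr)
  rw [factorAt_get? u (by omega), factorAt_get? u (by omega)] at h2
  have := Option.some.inj h2
  rw [this]
  congr 1
  omega

lemma hasPer_length {A : Type*} (w : List A) (h : w ≠ []) : HasPer w w.length :=
  ⟨List.length_pos_iff.mpr h, le_refl _, fun i hi => absurd hi (by omega)⟩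

lemma minPer_mem {A : Type*} {w : List A} (h : w ≠ []) : HasPer w (minPer w) :=
  Nat.sInf_mem (s := {q | HasPer w q}) ⟨_, hasPer_length w h⟩

lemma minPer_le {A : Type*} {w : List A} {q : ℕ} (h : HasPer w q) : minPer w ≤ q :=
  Nat.sInf_le h

lemma isFactor_factorAt {k : ℕ} (u : ℕ → Fin k) (i m : ℕ) : IsFactor (factorAt u i m) u :=
  ⟨i, by rw [factorAt_length]⟩

/-- Workhorse: in a (7/3)-power-free word, a repetition of period `q` has length `< 7q/3`. -/
lemma wh {u : ℕ → Fin 2} (hu : PowerFree (7/3) u) (i q L : ℕ) (hq : 1 ≤ q) (hqL : q ≤ L)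
    (hper : ∀ r, r + q < L → u (i + r) = u (i + r + q)) : 3 * L < 7 * q := by
  rcases Nat.eq_zero_or_pos L with hL | hL
  · omega
  set w := factorAt u i L with hw
  have hlen : w.length = L := factorAt_length u i L
  have hne : w ≠ [] := by
    intro h; rw [h] at hlen; simp at hlen; omega
  have hHP : HasPer w q := by
    refine ⟨hq, by omega, fun r hr => ?_⟩
    rw [hlen] at hr
    rw [factorAt_get? u (by omega), factorAt_get? u (by omega)]
    rw [← Nat.add_assoc]
    exact congrArg some (hper r hr)
  have h1 : 1 ≤ minPer w := (minPer_mem hne).1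
  have h2 : minPer w ≤ q := minPer_le hHP
  have hexp : exponent w < 7/3 := hu w hne (isFactor_factorAt u i L)
  rw [exponent, hlen] at hexp
  have hq0 : (0:ℝ) < (q:ℝ) := by exact_mod_cast hq
  have hm0 : (0:ℝ) < (minPer w : ℝ) := by exact_mod_cast h1
  have hle : (L:ℝ) / q ≤ (L:ℝ) / minPer w := by
    apply div_le_div_of_nonneg_left (by positivity) hm0 (by exact_mod_cast h2)
  have hlt : (L:ℝ) / q < 7/3 := lt_of_le_of_lt hle hexp
  rw [div_lt_div_iff₀ hq0 (by norm_num)] at hlt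
  exact_mod_cast (by linarith : (3:ℝ) * L < 7 * q)

/-! ### Thue–Morse recursion -/

lemma tm_two_mul (n : ℕ) : thueMorse (2 * n) = thueMorse n := by
  rcases Nat.eq_zero_or_pos n with h | h
  · simp [h]
  unfold thueMorse
  rw [Nat.digits_def' (by norm_num : 1 < 2) (by omega)]
  have h1 : 2 * n % 2 = 0 := by omega
  have h2 : 2 * n / 2 = n := by omega
  rw [h1, h2, List.count_cons]
  norm_num

lemma tm_two_mul_add_one (n : ℕ) : thueMorse (2 * n + 1) = thueMorse n + 1 := by
  unfold thueMorse
  rw [Nat.digits_def' (by norm_num : 1 < 2) (by omega)]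
  have h1 : (2 * n + 1) % 2 = 1 := by omega
  have h2 : (2 * n + 1) / 2 = n := by omega
  rw [h1, h2, List.count_cons]
  norm_num
  apply Fin.ext
  simp [Fin.val_add, Fin.val_natCast, Nat.add_mod]

lemma tm_pair (k : ℕ) : thueMorse (2 * k) ≠ thueMorse (2 * k + 1) := by
  rw [tm_two_mul, tm_two_mul_add_one]
  revert k
  intro k
  generalize thueMorse k = x
  revert x; decide

lemma fin2_q3 {a b c d e f : Fin 2} (h1 : d = a) (h2 : e = b) (h3 : f = c)
    (p0 : a ≠ b) (p1 : c ≠ d) (p2 : e ≠ f) : False := by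
  revert a b c d e f; decide

/-- Thue–Morse contains no overlap: no factor of period `q` and length `2q+1`. -/
lemma tm_no_overlap : ∀ q, 1 ≤ q → ∀ i, ¬ (∀ r, r ≤ q → thueMorse (i + r) = thueMorse (i + r + q)) := by
  intro q
  induction q using Nat.strong_induction_on with
  | _ q IH =>
  intro hq i H
  rcases Nat.even_or_odd q with ⟨q', hq'⟩ | ⟨h, hh⟩
  · -- q = 2q' even
    have hq'1 : 1 ≤ q' := by omega
    rcases Nat.even_or_odd i with ⟨s, hs⟩ | ⟨s, hs⟩
    · -- i = 2s
      refine IH q' (by omega) hq'1 s (fun r hr => ?_)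
      have := H (2 * r) (by omega)
      have e2 : i + 2 * r + q = 2 * (s + r + q') := by omega
      have e1 : i + 2 * r = 2 * (s + r) := by omega
      rw [e2, e1, tm_two_mul, tm_two_mul] at this
      exact this
    · -- i = 2s+1
      refine IH q' (by omega) hq'1 s (fun r hr => ?_)
      have := H (2 * r) (by omega)
      have e2 : i + 2 * r + q = 2 * (s + r + q') + 1 := by omega
      have e1 : i + 2 * r = 2 * (s + r) + 1 := by omega
      rw [e2, e1, tm_two_mul_add_one, tm_two_mul_add_one] at this
      exact add_right_cancel this
  · -- q = 2h+1 odd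
    rcases Nat.eq_or_lt_of_le hq with hq1 | hq3
    · -- q = 1
      rcases Nat.even_or_odd i with ⟨s, hs⟩ | ⟨s, hs⟩
      · have := H 0 (by omega)
        apply tm_pair s
        have e2 : i + 0 + q = 2 * s + 1 := by omega
        have e1 : i + 0 = 2 * s := by omega
        rw [e2, e1] at this
        exact this
      · have := H 1 (by omega)
        apply tm_pair (s + 1)
        have e2 : i + 1 + q = 2 * (s + 1) + 1 := by omega
        have e1 : i + 1 = 2 * (s + 1) := by omega
        rw [e2, e1] at this
        exact this
    · -- q ≥ 2, odd so q = 2h+1 with h ≥ 1, q ≥ 3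
      have hq3' : 3 ≤ q := by omega
      rcases Nat.even_or_odd i with ⟨s, hs⟩ | ⟨s', hs⟩
      · -- i = 2s even
        rcases Nat.eq_or_lt_of_le hq3' with hqe3 | hq5
        · -- q = 3 : bespoke contradiction
          have d0 := H 0 (by omega)
          have d1 := H 1 (by omega)
          have d2 := H 2 (by omega)
          have e0 : i + 0 = 2 * s := by omega
          have e0' : i + 0 + q = 2 * (s + 1) + 1 := by omega
          have e1 : i + 1 = 2 * s + 1 := by omega
          have e1' : i + 1 + q = 2 * (s + 2) := by omega
          have e2 : i + 2 = 2 * (s + 1) := by omega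
          have e2' : i + 2 + q = 2 * (s + 2) + 1 := by omega
          rw [e0', e0] at d0; rw [e1', e1] at d1; rw [e2', e2] at d2
          exact fin2_q3 d0.symm d1.symm d2.symm (tm_pair s) (tm_pair (s+1)) (tm_pair (s+2))
        · -- q ≥ 5 (odd, so ≥ 5)
          -- relation at s : t(s) = t(s+1)
          have R : ∀ s0, i ≤ 2 * s0 → 2 * s0 + 2 ≤ i + q →
              thueMorse s0 = thueMorse (s0 + 1) := by
            intro s0 h1 h2
            have a1 := H (2 * s0 + 1 - i) (by omega)
            have a2 := H (2 * s0 + 2 - i) (by omega)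
            have f2 : i + (2 * s0 + 1 - i) + q = 2 * (s0 + h + 1) := by omega
            have f1 : i + (2 * s0 + 1 - i) = 2 * s0 + 1 := by omega
            have f4 : i + (2 * s0 + 2 - i) + q = 2 * (s0 + h + 1) + 1 := by omega
            have f3 : i + (2 * s0 + 2 - i) = 2 * (s0 + 1) := by omega
            rw [f2, f1] at a1; rw [f4, f3] at a2
            have hne1 : thueMorse (2 * s0 + 1) ≠ thueMorse (2 * (s0 + 1)) := by
              rw [a1, a2]; exact tm_pair (s0 + h + 1)
            have hne0 : thueMorse (2 * s0) ≠ thueMorse (2 * s0 + 1) := tm_pair s0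
            have := fin2_ne_trans hne0 hne1
            rw [tm_two_mul, tm_two_mul] at this
            exact this
          have r1 := R s (by omega) (by omega)
          have r2 := R (s + 1) (by omega) (by omega)
          refine IH 1 (by omega) (by omega) s (fun r hr => ?_)
          interval_cases r
          · simpa using r1
          · have e : s + 1 + 1 = s + 2 := by omega
            simpa [e] using r2
      · -- i = 2s'+1 odd, q odd ≥ 3; s := s'+1
        have a0 := H 0 (by omega)
        have a1 := H 1 (by omega)
        have a2 := H 2 (by omega)
        have a3 := H 3 (by omega)
        have f0 : i + 0 = 2 * s' + 1 := by omega
        have f0' : i + 0 + q = 2 * (s' + h + 1) := by omega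
        have f1 : i + 1 = 2 * (s' + 1) := by omega
        have f1' : i + 1 + q = 2 * (s' + h + 1) + 1 := by omega
        have f2 : i + 2 = 2 * (s' + 1) + 1 := by omega
        have f2' : i + 2 + q = 2 * (s' + h + 2) := by omega
        have f3 : i + 3 = 2 * (s' + 2) := by omega
        have f3' : i + 3 + q = 2 * (s' + h + 2) + 1 := by omega
        rw [f0', f0] at a0; rw [f1', f1] at a1; rw [f2', f2] at a2; rw [f3', f3] at a3
        -- t(2s'+1) ≠ t(2s'+2) from pair (s'+h+1)
        have hne1 : thueMorse (2 * s' + 1) ≠ thueMorse (2 * (s' + 1)) := by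
          rw [a0, a1]; exact tm_pair (s' + h + 1)
        -- hence t(s') = t(s'+1)
        have r1 : thueMorse s' = thueMorse (s' + 1) := by
          have h1 : thueMorse (2 * s' + 1) = thueMorse s' + 1 := tm_two_mul_add_one s'
          have h2 : thueMorse (2 * (s' + 1)) = thueMorse (s' + 1) := tm_two_mul (s' + 1)
          rw [h1, h2] at hne1
          exact fin2_ne_add_one hne1
        -- t(2(s'+1)+1) ≠ t(2(s'+2)) from pair (s'+h+2)
        have hne2 : thueMorse (2 * (s' + 1) + 1) ≠ thueMorse (2 * (s' + 2)) := by
          rw [a2, a3]; exact tm_pair (s' + h + 2)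
        have hne0 : thueMorse (2 * (s' + 1)) ≠ thueMorse (2 * (s' + 1) + 1) := tm_pair (s' + 1)
        have r2 : thueMorse (s' + 1) = thueMorse (s' + 2) := by
          have := fin2_ne_trans hne0 hne2
          rw [tm_two_mul, tm_two_mul] at this
          exact this
        refine IH 1 (by omega) (by omega) s' (fun r hr => ?_)
        interval_cases r
        · simpa using r1
        · have e : s' + 1 + 1 = s' + 2 := by omega
          simpa [e] using r2

/-- Thue–Morse is overlap-free. -/
lemma tm_overlapFree : OverlapFree thueMorse := by
  intro v hne ⟨i, hv⟩
  set L := v.length with hL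
  have hL1 : 1 ≤ L := List.length_pos_iff.mpr hne
  have hmem := minPer_mem hne
  set q := minPer v with hqdef
  have hq1 : 1 ≤ q := hmem.1
  have hqL : q ≤ L := hmem.2.1
  have key : L ≤ 2 * q := by
    by_contra hc
    push_neg at hc
    apply tm_no_overlap q hq1 i
    intro r hr
    have hper : ∀ r', r' + q < L → thueMorse (i + r') = thueMorse (i + r' + q) := by
      rw [hv] at hmem
      exact hasPer_factorAt hmem
    exact hper r (by omega)
  rw [exponent, ← hL, ← hqdef]
  rw [div_le_iff₀ (by exact_mod_cast hq1 : (0:ℝ) < (q:ℝ))]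
  exact_mod_cast (by omega : L ≤ 2 * q)

/-! ### The Thue–Morse morphism on lists and infinite words -/

def muL (l : List (Fin 2)) : List (Fin 2) := l.flatMap fun a => [a, a + 1]

def muW (v : ℕ → Fin 2) : ℕ → Fin 2 := fun n => if n % 2 = 0 then v (n / 2) else v (n / 2) + 1

lemma muW_even (v : ℕ → Fin 2) (j : ℕ) : muW v (2 * j) = v j := by
  simp [muW, Nat.mul_div_cancel_left, Nat.mul_mod_right]

lemma muW_odd (v : ℕ → Fin 2) (j : ℕ) : muW v (2 * j + 1) = v j + 1 := by
  have h1 : (2 * j + 1) % 2 = 1 := by omega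
  have h2 : (2 * j + 1) / 2 = j := by omega
  simp [muW, h1, h2]

lemma muL_append (a b : List (Fin 2)) : muL (a ++ b) = muL a ++ muL b := by
  simp [muL]

lemma muL_infix {a b : List (Fin 2)} (h : a <:+: b) : muL a <:+: muL b := by
  obtain ⟨s, t, rfl⟩ := h
  exact ⟨muL s, muL t, by rw [← muL_append, ← muL_append]⟩

lemma factorAt_muW (v : ℕ → Fin 2) (i n : ℕ) :
    factorAt (muW v) (2 * i) (2 * n) = muL (factorAt v i n) := by
  induction n with
  | zero => simp [factorAt, muL]
  | succ n ih =>
    have h1 : 2 * (n + 1) = 2 * n + 2 := by ring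
    rw [h1, factorAt_add, factorAt_add v i n 1, muL_append, ← ih]
    congr 1
    have e1 : factorAt (muW v) (2*i + 2*n) 2 = [muW v (2*i+2*n), muW v (2*i+2*n+1)] := by
      simp [factorAt, List.range_succ]
    have e2 : factorAt v (i + n) 1 = [v (i+n)] := by simp [factorAt, List.range_succ]
    rw [e1, e2]
    have g1 : 2*i + 2*n = 2*(i+n) := by ring
    have g2 : 2*i + 2*n + 1 = 2*(i+n) + 1 := by ring
    rw [g2, g1, muW_even, muW_odd]
    simp [muL]

lemma tm_muW : muW thueMorse = thueMorse := by
  funext r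
  rcases Nat.even_or_odd r with ⟨j, hj⟩ | ⟨j, hj⟩
  · have : r = 2 * j := by omega
    rw [this, muW_even, tm_two_mul]
  · rw [hj, muW_odd, tm_two_mul_add_one]

lemma factorAt_infix_factorAt {k : ℕ} (u : ℕ → Fin k) {i n i₀ L : ℕ}
    (h1 : i₀ ≤ i) (h2 : i + n ≤ i₀ + L) : factorAt u i n <:+: factorAt u i₀ L := by
  have hL : L = (i - i₀) + (n + (i₀ + L - (i + n))) := by omega
  rw [hL, factorAt_add, factorAt_add]
  have e : i₀ + (i - i₀) = i := by omega
  rw [e]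
  exact ⟨factorAt u i₀ (i - i₀), factorAt u (i + n) (i₀ + L - (i + n)), by simp⟩

lemma isFactor_of_infix {u : ℕ → Fin 2} {w : List (Fin 2)} {i m : ℕ}
    (h : w <:+: factorAt u i m) : IsFactor w u := by
  obtain ⟨s, t, ht⟩ := h
  have hm : s.length + (w.length + t.length) = m := by
    have := congrArg List.length ht
    simp [factorAt_length] at this
    omega
  rw [← hm, factorAt_add, factorAt_add, List.append_assoc s w t] at ht
  have h1 := List.append_inj ht (factorAt_length u i s.length).symm
  have h2 := List.append_inj h1.2 (factorAt_length u (i + s.length) w.length).symm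
  exact ⟨i + s.length, h2.1⟩

/-- Key recurrence: every factor of t of length n occurs in `μ^k(a)` for a suitable `k`
    and every letter `a`. -/
lemma tm_recurrence : ∀ n, ∃ k, ∀ (a : Fin 2) (i : ℕ),
    factorAt thueMorse i n <:+: muL^[k] [a] := by
  intro n
  induction n using Nat.strong_induction_on with
  | _ n IH =>
  rcases Nat.lt_or_ge n 3 with hn | hn
  · refine ⟨3, fun a i => ?_⟩
    interval_cases n
    · simp [factorAt]
    · have e : factorAt thueMorse i 1 = [thueMorse i] := by simp [factorAt, List.range_succ]
      rw [e]
      have : ∀ (x b : Fin 2), [x] <:+: muL^[3] [b] := by decide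
      exact this _ a
    · have e : factorAt thueMorse i 2 = [thueMorse i, thueMorse (i+1)] := by
        simp [factorAt, List.range_succ]
      rw [e]
      have : ∀ (x y b : Fin 2), [x, y] <:+: muL^[3] [b] := by decide
      exact this _ _ a
  · -- n ≥ 3
    have hm : n / 2 + 1 < n := by omega
    obtain ⟨k, hk⟩ := IH (n / 2 + 1) hm
    refine ⟨k + 1, fun a i => ?_⟩
    have h1 : factorAt thueMorse i n <:+: factorAt thueMorse (2 * (i / 2)) (2 * (n / 2 + 1)) :=
      factorAt_infix_factorAt thueMorse (by omega) (by omega)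
    have h2 : factorAt thueMorse (2 * (i / 2)) (2 * (n / 2 + 1))
        = muL (factorAt thueMorse (i / 2) (n / 2 + 1)) := by
      conv_lhs => rw [← tm_muW]
      exact factorAt_muW thueMorse (i / 2) (n / 2 + 1)
    have h3 := muL_infix (hk a (i / 2))
    rw [Function.iterate_succ_apply']
    exact h1.trans (h2 ▸ h3)

/-! ### Structure of (7/3)-power-free words -/

lemma fin2_eq_or (x y : Fin 2) : x = y ∨ x = y + 1 := by revert x y; decide

section Structure

variable {u : ℕ → Fin 2} (hu : PowerFree (7/3) u)

include hu

lemma no_triple (i : ℕ) : ¬ (u i = u (i+1) ∧ u (i+1) = u (i+2)) := by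
  rintro ⟨h1, h2⟩
  have := wh hu i 1 3 (by omega) (by omega) (fun r hr => by
    have hr' : r ≤ 1 := by omega
    interval_cases r
    · simpa using h1
    · simpa using h2)
  omega

lemma dbl_dense (i : ℕ) : ∃ r, i ≤ r ∧ r ≤ i + 3 ∧ u r = u (r+1) := by
  by_contra hc
  push_neg at hc
  have := wh hu i 2 5 (by omega) (by omega) (fun r hr => by
    have h1 : u (i+r) ≠ u (i+r+1) := hc (i+r) (by omega) (by omega)
    have h2 : u (i+r+1) ≠ u (i+r+1+1) := hc (i+r+1) (by omega) (by omega)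
    have := fin2_ne_trans h1 h2
    have e : i + r + 1 + 1 = i + r + 2 := by omega
    rwa [e] at this)
  omega

lemma parity_consec : ∀ p m, 1 ≤ p → u p = u (p+1) → u (p+2*m+1) = u (p+2*m+2) →
    (∀ r, p < r → r < p + 2*m+1 → u r ≠ u (r+1)) → False := by
  intro p m hp hDp hDq hbet
  match m with
  | 0 =>
    have e1 : p + 2*0 + 1 = p + 1 := by omega
    have e2 : p + 2*0 + 2 = p + 2 := by omega
    rw [e1, e2] at hDq
    exact no_triple hu p ⟨hDp, hDq⟩
  | 1 =>
    obtain ⟨p', rfl⟩ : ∃ p', p = p' + 1 := ⟨p - 1, by omega⟩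
    set a := u (p'+1) with ha
    have e1 : u (p'+2) = a := hDp.symm
    have hDq' : u (p'+4) = u (p'+5) := by
      have g1 : p' + 1 + 2*1 + 1 = p' + 4 := by omega
      have g2 : p' + 1 + 2*1 + 2 = p' + 5 := by omega
      rw [g1, g2] at hDq
      exact hDq
    have e2 : u (p'+3) = a + 1 := by
      have h := hbet (p'+2) (by omega) (by omega)
      rw [e1] at h
      exact fin2_ne h
    have e3 : u (p'+4) = a := by
      have h := hbet (p'+3) (by omega) (by omega)
      rw [e2] at h
      rw [show p' + 3 + 1 = p' + 4 from by omega] at h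
      rw [fin2_ne h, fin2_aa]
    have e4 : u (p'+5) = a := by rw [← hDq', e3]
    have e5 : u (p'+6) = a + 1 := by
      rcases fin2_eq_or (u (p'+6)) a with h | h
      · exact absurd ⟨e3.trans e4.symm, e4.trans h.symm⟩ (no_triple hu (p'+4))
      · exact h
    have e6 : u p' = a + 1 := by
      rcases fin2_eq_or (u p') a with h | h
      · exact absurd ⟨h.trans ha, e1.symm⟩ (no_triple hu p')
      · exact h
    have := wh hu p' 3 7 (by omega) (by omega) (fun r hr => by
      have hr' : r ≤ 3 := by omega
      interval_cases r
      · rw [show p' + 0 = p' from by omega, show p' + 0 + 3 = p' + 3 from by omega, e6, e2]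
      · rw [show p' + 1 + 3 = p' + 4 from by omega, e3, ha]
      · rw [show p' + 2 + 3 = p' + 5 from by omega, e1, e4]
      · rw [show p' + 3 + 3 = p' + 6 from by omega, e2, e5])
    omega
  | (m'+2) =>
    obtain ⟨r, hr1, hr2, hr3⟩ := dbl_dense hu (p+1)
    exact hbet r (by omega) (by omega) hr3

lemma parity_all : ∀ d p q, q - p = d → 1 ≤ p → p ≤ q → u p = u (p+1) → u q = u (q+1) →
    (q - p) % 2 = 0 := by
  intro d
  induction d using Nat.strong_induction_on with
  | _ d IHd =>
  intro p q hd hp hpq hDp hDq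
  rcases Nat.eq_or_lt_of_le hpq with rfl | hlt
  · omega
  by_cases hmid : ∃ r, p < r ∧ r < q ∧ u r = u (r+1)
  · obtain ⟨r, h1, h2, h3⟩ := hmid
    have e1 := IHd (r - p) (by omega) p r rfl (by omega) (by omega) hDp h3
    have e2 := IHd (q - r) (by omega) r q rfl (by omega) (by omega) h3 hDq
    omega
  · push_neg at hmid
    rcases Nat.even_or_odd (q - p) with he | ⟨m, hm⟩
    · obtain ⟨m, hm⟩ := he; omega
    exfalso
    apply parity_consec hu p m hp hDp
    · rw [show p + 2*m + 1 = q from by omega, show p + 2*m + 2 = q + 1 from by omega]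
      exact hDq
    · intro r h1 h2
      exact hmid r h1 (by omega)

omit hu in
/-- From a cut position `c` with no equal pair across any even-offset boundary,
    `u` desubstitutes from position `c` on. -/
lemma desubstitute {c : ℕ} (hND : ∀ j, u (c + 2*j) ≠ u (c + 2*j + 1)) :
    ∀ r, u (c + r) = muW (fun j => u (c + 2*j)) r := by
  intro r
  rcases Nat.even_or_odd r with ⟨j, hj⟩ | ⟨j, hj⟩
  · rw [show r = 2*j from by omega, muW_even]
  · have e : c + (2*j + 1) = c + 2*j + 1 := by omega
    rw [hj, muW_odd, e, fin2_ne (hND j)]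

lemma pf_half {c : ℕ} (hW : ∀ r, u (c + r) = muW (fun j => u (c + 2*j)) r) :
    PowerFree (7/3) (fun j => u (c + 2*j)) := by
  set v : ℕ → Fin 2 := fun j => u (c + 2*j) with hv
  intro w hne ⟨i, hw⟩
  set n := w.length with hn
  have hn1 : 1 ≤ n := List.length_pos_iff.mpr hne
  have hmem := minPer_mem hne
  set q := minPer w with hqdef
  have hq1 : 1 ≤ q := hmem.1
  have hqn : q ≤ n := hmem.2.1
  have hvper : ∀ r, r + q < n → v (i + r) = v (i + r + q) := by
    rw [hw] at hmem
    exact hasPer_factorAt hmem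
  have huper : ∀ s, s + 2*q < 2*n → u (c + 2*i + s) = u (c + 2*i + s + 2*q) := by
    intro s hs
    rcases Nat.even_or_odd s with ⟨r, hr⟩ | ⟨r, hr⟩
    · have h := hvper r (by omega)
      have g2 : c + 2*i + s + 2*q = c + 2*(i + r + q) := by omega
      have g1 : c + 2*i + s = c + 2*(i + r) := by omega
      rw [g2, g1]
      exact h
    · have h := hvper r (by omega)
      have g2 : c + 2*i + s + 2*q = c + (2*(i + r + q) + 1) := by omega
      have g1 : c + 2*i + s = c + (2*(i + r) + 1) := by omega
      rw [g2, g1, hW (2*(i+r)+1), hW (2*(i+r+q)+1), muW_odd, muW_odd]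
      rw [hv] at h ⊢
      simp only [h]
  have hwh := wh hu (c + 2*i) (2*q) (2*n) (by omega) (by omega) huper
  rw [exponent, ← hn, ← hqdef]
  rw [div_lt_div_iff₀ (by exact_mod_cast hq1 : (0:ℝ) < (q:ℝ)) (by norm_num : (0:ℝ) < 3)]
  exact_mod_cast (by omega : n * 3 < 7 * q)

lemma both_dbl {p q : ℕ} (hp : 1 ≤ p) (hq : 1 ≤ q)
    (hDp : u p = u (p+1)) (hDq : u q = u (q+1)) : p % 2 = q % 2 := by
  rcases le_total p q with hle | hle
  · have := parity_all hu (q - p) p q rfl hp hle hDp hDq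
    omega
  · have := parity_all hu (p - q) q p rfl hq hle hDq hDp
    omega

/-- Structure theorem: a (7/3)-power-free word is, from some position `c` on,
    the μ-image of another (7/3)-power-free word. -/
lemma structure_lemma :
    ∃ (c : ℕ) (v : ℕ → Fin 2), PowerFree (7/3) v ∧ ∀ r, u (c + r) = muW v r := by
  obtain ⟨p₁, hp1, hp4, hDp₁⟩ := dbl_dense hu 1
  have main : ∃ c, ∀ j, u (c + 2*j) ≠ u (c + 2*j + 1) := by
    by_cases hpar : p₁ % 2 = 0
    · refine ⟨1, fun j h => ?_⟩
      have := both_dbl hu (by omega) hp1 (show u (1+2*j) = u ((1+2*j)+1) from h) hDp₁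
      omega
    · by_cases h0 : u 0 = u 1
      · refine ⟨2, fun j h => ?_⟩
        have := both_dbl hu (by omega) hp1 (show u (2+2*j) = u ((2+2*j)+1) from h) hDp₁
        omega
      · refine ⟨0, fun j h => ?_⟩
        match j with
        | 0 => exact h0 (by simpa using h)
        | (j'+1) =>
          have h' : u (2*(j'+1)) = u ((2*(j'+1))+1) := by
            rw [show 2*(j'+1) = 0 + 2*(j'+1) from by omega]
            exact h
          have := both_dbl hu (by omega) hp1 h' hDp₁
          omega
  obtain ⟨c, hND⟩ := main
  have hW := desubstitute hND
  exact ⟨c, fun j => u (c + 2*j), pf_half hu hW, hW⟩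

end Structure


/-! ### Iterating the structure theorem and conclusion -/

lemma muW_shift {X Y : ℕ → Fin 2} {d : ℕ} (h : ∀ s, X (d + s) = Y s) :
    ∀ r, muW X (2*d + r) = muW Y r := by
  intro r
  rcases Nat.even_or_odd r with ⟨j, hj⟩ | ⟨j, hj⟩
  · have e : 2*d + r = 2*(d + j) := by omega
    rw [e, show r = 2*j from by omega, muW_even, muW_even]
    exact h j
  · have e : 2*d + r = 2*(d + j) + 1 := by omega
    rw [e, hj, muW_odd, muW_odd, h j]

lemma iterate_shift {v v' : ℕ → Fin 2} {c' : ℕ} (h : ∀ s, v (c' + s) = muW v' s) :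
    ∀ k r, (muW^[k] v) (2^k * c' + r) = (muW^[k] (muW v')) r := by
  intro k
  induction k with
  | zero => simpa using h
  | succ k ih =>
    intro r
    rw [Function.iterate_succ_apply', Function.iterate_succ_apply']
    have e : 2^(k+1) * c' = 2 * (2^k * c') := by ring
    rw [e]
    exact muW_shift ih r

lemma structure_iter {u : ℕ → Fin 2} (hu : PowerFree (7/3) u) (k : ℕ) :
    ∃ (c : ℕ) (v : ℕ → Fin 2), PowerFree (7/3) v ∧ ∀ r, u (c + r) = (muW^[k] v) r := by
  induction k with
  | zero => exact ⟨0, u, hu, fun r => by simp⟩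
  | succ k ih =>
    obtain ⟨c, v, hv, hcv⟩ := ih
    obtain ⟨c', v', hv', hcv'⟩ := structure_lemma hv
    refine ⟨c + 2^k * c', v', hv', fun r => ?_⟩
    have e : c + 2^k * c' + r = c + (2^k * c' + r) := by omega
    rw [e, hcv (2^k * c' + r), iterate_shift hcv' k r, ← Function.iterate_succ_apply]

lemma factorAt_muW_iter (v : ℕ → Fin 2) (k i n : ℕ) :
    factorAt (muW^[k] v) (2^k * i) (2^k * n) = (muL^[k]) (factorAt v i n) := by
  induction k with
  | zero => simp
  | succ k ih =>
    rw [Function.iterate_succ_apply', Function.iterate_succ_apply']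
    have e1 : 2^(k+1) * i = 2 * (2^k * i) := by ring
    have e2 : 2^(k+1) * n = 2 * (2^k * n) := by ring
    rw [e1, e2, factorAt_muW, ih]

lemma factorAt_congr {u v : ℕ → Fin 2} {c m : ℕ} (h : ∀ r, u (c + r) = v r) :
    factorAt u c m = factorAt v 0 m := by
  unfold factorAt
  apply List.map_congr_left
  intro a _
  rw [h a, Nat.zero_add]

/-- Every factor of Thue–Morse is a factor of any (7/3)-power-free infinite binary word. -/
lemma tm_factor_subset {u : ℕ → Fin 2} (hu : PowerFree (7/3) u) {w : List (Fin 2)}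
    (hw : IsFactor w thueMorse) : IsFactor w u := by
  obtain ⟨i, hi⟩ := hw
  obtain ⟨k, hk⟩ := tm_recurrence w.length
  obtain ⟨c, v, hv, hcv⟩ := structure_iter hu k
  have h1 : factorAt u c (2^k) = muL^[k] [v 0] := by
    rw [factorAt_congr hcv]
    have e0 : factorAt (muW^[k] v) 0 (2^k) = factorAt (muW^[k] v) (2^k * 0) (2^k * 1) := by
      norm_num
    rw [e0, factorAt_muW_iter,
      show factorAt v 0 1 = [v 0] from by simp [factorAt, List.range_succ]]
  have h2 : w <:+: factorAt u c (2^k) := by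
    rw [h1, hi]
    exact hk (v 0) i
  exact isFactor_of_infix h2


/-- The Thue–Morse word is overlap-free (hence (7/3)-power-free) and has minimum
subword complexity among all (7/3)-power-free infinite binary words. -/
theorem thueMorse_min_complexity :
    OverlapFree thueMorse ∧
    ∀ u : ℕ → Fin 2, PowerFree (7 / 3) u →
      ∀ n, complexity thueMorse n ≤ complexity u n := by
  refine ⟨tm_overlapFree, fun u hu n => ?_⟩
  apply Set.ncard_le_ncard
  · rintro w ⟨hlen, hfac⟩
    exact ⟨hlen, tm_factor_subset hu hfac⟩
  · apply Set.Finite.subset (List.finite_length_eq (Fin 2) n)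
    intro w hw
    exact hw.1
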